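/- Let g : [0,∞) → [0,∞) be a function such that (a) g is nonincreasing, (b) g is convex, (c) g(x) → 0 as x → ∞, and (d) g(x) ≥ g(0) - x for all x ≥ 0. Then there exists a probability measure Π on [0,∞) with finite expectation such that g(t) = E_Π[(X-t)^+] for all t ≥ 0. -/

import Mathlib

open MeasureTheory Filter Set Topology intervalIntegral

noncomputable def psiPhi (g : ℝ → ℝ) (x : ℝ) : ℝ := sInf (slope g x '' Ioi x)

noncomputable def psiF (g : ℝ → ℝ) (x : ℝ) : ℝ := if x < 0 then 0 else 1 + psiPhi g x

set_option linter.unusedSectionVars false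

section aux
variable {g : ℝ → ℝ} {x : ℝ}
    (hnn : ∀ x ∈ Set.Ici (0:ℝ), 0 ≤ g x)
    (hanti : AntitoneOn g (Set.Ici 0))
    (hconv : ConvexOn ℝ (Set.Ici 0) g)
    (hlim : Tendsto g atTop (nhds 0))
    (hlb : ∀ x ∈ Set.Ici (0:ℝ), g 0 - x ≤ g x)

include hconv in
lemma psi_cross {x₁ x₂ y : ℝ} (h1 : 0 ≤ x₁) (h12 : x₁ ≤ x₂) (h2y : x₂ < y) :
    slope g x₁ y ≤ slope g x₂ y := by
  rw [slope_comm g x₁ y, slope_comm g x₂ y]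
  have hy : y ∈ Set.Ici (0:ℝ) := le_trans (h1.trans h12) h2y.le
  exact hconv.slope_mono hy ⟨h1, by intro h; rw [mem_singleton_iff] at h; subst h; linarith⟩
    ⟨h1.trans h12, by intro h; rw [mem_singleton_iff] at h; subst h; linarith⟩ h12

include hconv hlb in
lemma psi_slope_lb {x y : ℝ} (hx : 0 ≤ x) (hxy : x < y) : -1 ≤ slope g x y := by
  have h0y : slope g 0 y ≤ slope g x y := by
    rcases eq_or_lt_of_le hx with h | h
    · rw [← h]
    · exact psi_cross hconv le_rfl hx hxy
  refine le_trans ?_ h0y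
  have hy : 0 < y := lt_of_le_of_lt hx hxy
  rw [slope_def_field, sub_zero, le_div_iff₀ hy]
  have := hlb y hy.le
  linarith

include hconv hlb in
lemma psi_bddBelow {x : ℝ} (hx : 0 ≤ x) : BddBelow (slope g x '' Ioi x) := by
  refine ⟨-1, ?_⟩
  rintro b ⟨y, hy, rfl⟩
  exact psi_slope_lb hconv hlb hx hy

lemma psi_nonempty (x : ℝ) : (slope g x '' Ioi x).Nonempty :=
  ⟨slope g x (x + 1), ⟨x + 1, by simp, rfl⟩⟩

include hconv hlb in
lemma psi_phi_lb {x : ℝ} (hx : 0 ≤ x) : -1 ≤ psiPhi g x :=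
  le_csInf (psi_nonempty x) (by rintro b ⟨y, hy, rfl⟩; exact psi_slope_lb hconv hlb hx hy)

include hconv hlb in
lemma psi_phi_le_slope {x y : ℝ} (hx : 0 ≤ x) (hxy : x < y) : psiPhi g x ≤ slope g x y :=
  csInf_le (psi_bddBelow hconv hlb hx) ⟨y, hxy, rfl⟩

include hanti hconv hlb in
lemma psi_phi_nonpos (hx : 0 ≤ x) : psiPhi g x ≤ 0 := by
  have h1 : slope g x (x + 1) ≤ 0 := by
    rw [slope_def_field]
    apply div_nonpos_of_nonpos_of_nonneg
    · have h2 : g (x + 1) ≤ g x := hanti (show x ∈ Set.Ici (0:ℝ) from hx)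
        (show x + 1 ∈ Set.Ici (0:ℝ) from by simp only [mem_Ici]; linarith) (by linarith)
      linarith
    · linarith
  exact le_trans (psi_phi_le_slope hconv hlb hx (by linarith)) h1


include hconv hlb in
lemma psi_phi_mono : MonotoneOn (psiPhi g) (Set.Ici 0) := by
  intro x₁ h1 x₂ h2 h12
  refine le_csInf (psi_nonempty x₂) ?_
  rintro b ⟨y, hy, rfl⟩
  exact le_trans (psi_phi_le_slope hconv hlb h1 (lt_of_le_of_lt h12 hy))
    (psi_cross hconv h1 h12 hy)

include hconv hlb in
lemma psi_slope_monoOn (hx : 0 ≤ x) : MonotoneOn (slope g x) (Ioi x) := by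
  have := hconv.slope_mono (show x ∈ Set.Ici (0:ℝ) from hx)
  exact this.mono (fun y hy => ⟨le_trans hx (le_of_lt hy), ne_of_gt hy⟩)

include hconv hlb in
lemma psi_hasDeriv (hx : 0 ≤ x) : HasDerivWithinAt g (psiPhi g x) (Ioi x) x := by
  rw [hasDerivWithinAt_iff_tendsto_slope' (notMem_Ioi_self)]
  exact (psi_slope_monoOn hconv hlb hx).tendsto_nhdsGT (psi_bddBelow hconv hlb hx)

include hnn hanti hconv hlb hlim in
lemma psi_phi_tendsto : Tendsto (psiPhi g) atTop (𝓝 0) := by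
  have hlow : ∀ y : ℝ, 0 < y → -(g 0) / y ≤ psiPhi g y := by
    intro y hy
    have h0y : slope g 0 y ≤ psiPhi g y := by
      refine le_csInf (psi_nonempty y) ?_
      rintro b ⟨z, hz, rfl⟩
      calc slope g 0 y ≤ slope g 0 z := by
            have := psi_slope_monoOn hconv hlb (le_refl (0:ℝ))
            exact this (show y ∈ Ioi (0:ℝ) from hy) (show z ∈ Ioi (0:ℝ) from hy.trans hz)
              (le_of_lt hz)
        _ ≤ slope g y z := psi_cross hconv le_rfl hy.le hz
    refine le_trans ?_ h0y
    rw [slope_def_field, sub_zero]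
    have hgy : 0 ≤ g y := hnn y hy.le
    gcongr
    linarith
  have hneg : Tendsto (fun y : ℝ => -(g 0) / y) atTop (𝓝 (0:ℝ)) :=
    tendsto_const_nhds.div_atTop tendsto_id
  refine tendsto_of_tendsto_of_tendsto_of_le_of_le' hneg tendsto_const_nhds ?_ ?_
  · filter_upwards [eventually_gt_atTop (0:ℝ)] with y hy using hlow y hy
  · filter_upwards [eventually_ge_atTop (0:ℝ)] with y hy using
      psi_phi_nonpos hanti hconv hlb hy

include hanti hconv hlb in
lemma psi_contOn : ContinuousOn g (Set.Ici 0) := by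
  have hco : ContinuousOn g (Ioi 0) :=
    (hconv.subset (fun y hy => le_of_lt hy) (convex_Ioi 0)).continuousOn isOpen_Ioi
  intro z hz
  rcases eq_or_lt_of_le (show (0:ℝ) ≤ z from hz) with h | h
  · subst h
    have hup : ∀ᶠ y in 𝓝[Set.Ici (0:ℝ)] 0, g y ≤ g 0 := by
      filter_upwards [self_mem_nhdsWithin] with y hy using hanti self_mem_Ici hy hy
    have hdn : ∀ᶠ y in 𝓝[Set.Ici (0:ℝ)] 0, g 0 - y ≤ g y := by
      filter_upwards [self_mem_nhdsWithin] with y hy using hlb y hy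
    have h1 : Tendsto (fun y : ℝ => g 0 - y) (𝓝[Set.Ici (0:ℝ)] 0) (𝓝 (g 0)) := by
      have := (tendsto_id.const_sub (g 0)).mono_left (nhdsWithin_le_nhds
        (s := Set.Ici (0:ℝ)) (a := (0:ℝ)))
      simpa using this
    exact tendsto_of_tendsto_of_tendsto_of_le_of_le' h1 tendsto_const_nhds hdn hup
  · exact (hco.continuousAt (Ioi_mem_nhds h)).continuousWithinAt

include hanti hconv hlb in
lemma psi_ftc {t T : ℝ} (ht : 0 ≤ t) (htT : t ≤ T) :
    ∫ y in t..T, psiPhi g y = g T - g t := by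
  refine integral_eq_sub_of_hasDeriv_right_of_le htT
    ((psi_contOn hanti hconv hlb).mono ?_) (fun y hy => psi_hasDeriv hconv hlb ?_) ?_
  · exact fun y hy => ht.trans hy.1
  · exact ht.trans hy.1.le
  · refine MonotoneOn.intervalIntegrable ((psi_phi_mono hconv hlb).mono ?_)
    rw [uIcc_of_le htT]
    exact fun y hy => ht.trans hy.1

include hnn hanti hconv hlb hlim in
lemma psi_integralOn {t : ℝ} (ht : 0 ≤ t) :
    IntegrableOn (fun y => -psiPhi g y) (Ioi t) volume ∧
      ∫ y in Ioi t, -psiPhi g y = g t := by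
  have key : Tendsto (fun T : ℝ => ∫ y in t..T, -psiPhi g y) atTop (𝓝 (g t)) := by
    have h1 : Tendsto (fun T : ℝ => g t - g T) atTop (𝓝 (g t)) := by
      simpa using (tendsto_const_nhds (x := g t)).sub hlim
    refine h1.congr' ?_
    filter_upwards [eventually_ge_atTop t] with T hT
    rw [intervalIntegral.integral_neg, psi_ftc hanti hconv hlb ht hT]
    ring
  have hIoc : ∀ T : ℝ, IntegrableOn (fun y => -psiPhi g y) (Ioc t T) volume := by
    intro T
    rcases le_or_gt t T with h | h
    · have : IntervalIntegrable (fun y => -psiPhi g y) volume t T := by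
        refine (MonotoneOn.intervalIntegrable ((psi_phi_mono hconv hlb).mono ?_)).neg
        rw [uIcc_of_le h]; exact fun y hy => ht.trans hy.1
      exact (intervalIntegrable_iff_integrableOn_Ioc_of_le h).mp this
    · simp [Ioc_eq_empty (not_lt.mpr h.le)]
  have hnorm : Tendsto (fun T : ℝ => ∫ y in t..T, ‖-psiPhi g y‖) atTop (𝓝 (g t)) := by
    refine key.congr' ?_
    filter_upwards [eventually_ge_atTop t] with T hT
    refine intervalIntegral.integral_congr fun y hy => ?_
    rw [uIcc_of_le hT] at hy
    rw [Real.norm_of_nonneg (by simpa using psi_phi_nonpos hanti hconv hlb (ht.trans hy.1))]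
  have hInt : IntegrableOn (fun y => -psiPhi g y) (Ioi t) volume :=
    integrableOn_Ioi_of_intervalIntegral_norm_tendsto (g t) t hIoc tendsto_id hnorm
  refine ⟨hInt, tendsto_nhds_unique (intervalIntegral_tendsto_integral_Ioi t hInt tendsto_id) key⟩


end aux

section aux4
variable {g : ℝ → ℝ} {x : ℝ}
    (hanti : AntitoneOn g (Set.Ici 0))
    (hconv : ConvexOn ℝ (Set.Ici 0) g)
    (hlb : ∀ x ∈ Set.Ici (0:ℝ), g 0 - x ≤ g x)

include hanti hconv hlb in
lemma psiF_bounds : ∀ y : ℝ, 0 ≤ psiF g y ∧ psiF g y ≤ 1 := by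
  intro y
  unfold psiF
  split_ifs with h
  · norm_num
  · push_neg at h
    constructor
    · have := psi_phi_lb hconv hlb h; linarith
    · have := psi_phi_nonpos hanti hconv hlb h; linarith

include hanti hconv hlb in
lemma psiF_mono : Monotone (psiF g) := by
  intro a b hab
  unfold psiF
  split_ifs with h1 h2 h2
  · exact le_rfl
  · have hb : 0 ≤ b := not_lt.mp h2
    have := psi_phi_lb hconv hlb hb; linarith
  · linarith
  · have ha : 0 ≤ a := not_lt.mp h1
    have := psi_phi_mono hconv hlb ha (not_lt.mp h2) hab
    linarith

end aux4

section aux5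
variable {g : ℝ → ℝ} (hF : Monotone (psiF g))

lemma psi_f_neg {x : ℝ} (hx : x < 0) : hF.stieltjesFunction x = 0 := by
  rw [Monotone.stieltjesFunction_eq]
  refine le_antisymm ?_ ?_
  · have h1 : Function.rightLim (psiF g) x ≤ psiF g (x/2) := hF.rightLim_le (by linarith)
    have h2 : psiF g (x/2) = 0 := if_pos (by linarith)
    linarith
  · have h1 : psiF g x ≤ Function.rightLim (psiF g) x := hF.le_rightLim le_rfl
    have h2 : psiF g x = 0 := if_pos hx
    linarith

lemma psi_f_bot : Tendsto hF.stieltjesFunction atBot (𝓝 0) := by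
  refine Tendsto.congr' ?_ (tendsto_const_nhds (x := (0:ℝ)))
  filter_upwards [eventually_lt_atBot (0:ℝ)] with x hx
  exact (psi_f_neg hF hx).symm

lemma psi_f_top (hphi : Tendsto (psiPhi g) atTop (𝓝 0)) :
    Tendsto hF.stieltjesFunction atTop (𝓝 1) := by
  have hFtop : Tendsto (psiF g) atTop (𝓝 1) := by
    have h1 : Tendsto (fun x => 1 + psiPhi g x) atTop (𝓝 1) := by
      simpa using (tendsto_const_nhds (x := (1:ℝ))).add hphi
    refine h1.congr' ?_
    filter_upwards [eventually_ge_atTop (0:ℝ)] with x hx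
    exact (if_neg (not_lt.mpr hx)).symm
  have hle1 : ∀ x : ℝ, psiF g x ≤ hF.stieltjesFunction x := by
    intro x; rw [Monotone.stieltjesFunction_eq]; exact hF.le_rightLim le_rfl
  have hle2 : ∀ x : ℝ, hF.stieltjesFunction x ≤ psiF g (x + 1) := by
    intro x; rw [Monotone.stieltjesFunction_eq]; exact hF.rightLim_le (lt_add_one x)
  refine tendsto_of_tendsto_of_tendsto_of_le_of_le hFtop ?_ hle1 hle2
  exact hFtop.comp (tendsto_atTop_add_const_right atTop 1 tendsto_id)

lemma psi_measure_Iio : hF.stieltjesFunction.measure (Set.Iio 0) = 0 := by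
  have hU : Set.Iio (0:ℝ) = ⋃ n : ℕ, Set.Iic (-(1/((n:ℝ)+1))) := by
    ext z
    simp only [mem_Iio, mem_iUnion, mem_Iic]
    constructor
    · intro hz
      obtain ⟨n, hn⟩ := exists_nat_one_div_lt (show (0:ℝ) < -z by linarith)
      exact ⟨n, by linarith⟩
    · rintro ⟨n, hn⟩
      have : (0:ℝ) < 1/(n+1) := by positivity
      linarith
  rw [hU]
  refine measure_iUnion_null fun n => ?_
  rw [StieltjesFunction.measure_Iic _ (psi_f_bot hF)]
  have : (0:ℝ) < 1/(n+1) := by positivity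
  rw [psi_f_neg hF (by linarith)]
  simp

lemma psi_measure_Ioi (hb : ∀ y : ℝ, 0 ≤ psiF g y ∧ psiF g y ≤ 1)
    (hphi : Tendsto (psiPhi g) atTop (𝓝 0)) (y : ℝ) :
    hF.stieltjesFunction.measure (Set.Ioi y) = ENNReal.ofReal (1 - hF.stieltjesFunction y) := by
  have hprob : IsProbabilityMeasure hF.stieltjesFunction.measure :=
    StieltjesFunction.isProbabilityMeasure _ (psi_f_bot hF) (psi_f_top hF hphi)
  have hcompl : Set.Ioi y = (Set.Iic y)ᶜ := by simp
  have hfb : 0 ≤ hF.stieltjesFunction y ∧ hF.stieltjesFunction y ≤ 1 := by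
    constructor
    · refine le_trans (hb y).1 ?_
      rw [Monotone.stieltjesFunction_eq]; exact hF.le_rightLim le_rfl
    · refine le_trans ?_ (hb (y+1)).2
      rw [Monotone.stieltjesFunction_eq]; exact hF.rightLim_le (lt_add_one y)
  rw [hcompl, measure_compl measurableSet_Iic (measure_ne_top _ _),
    StieltjesFunction.measure_Iic _ (psi_f_bot hF), measure_univ, sub_zero,
    ENNReal.ofReal_sub 1 hfb.1, ENNReal.ofReal_one]

lemma psi_f_ae : hF.stieltjesFunction =ᵐ[volume] psiF g := by
  have hsub : {x | hF.stieltjesFunction x ≠ psiF g x} ⊆ {x | ¬ContinuousAt (psiF g) x} := by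
    intro x hx
    simp only [mem_setOf_eq] at hx ⊢
    intro hc
    refine hx ?_
    rw [Monotone.stieltjesFunction_eq]
    exact rightLim_eq_of_tendsto (h := nhdsGT_neBot x)
      (hc.tendsto.mono_left nhdsWithin_le_nhds)
  have h0 : volume {x | ¬ContinuousAt (psiF g) x} = 0 :=
    (hF.countable_not_continuousAt).measure_zero _
  rw [Filter.EventuallyEq, ae_iff]
  exact measure_mono_null hsub h0

end aux5

/-- Every nonnegative, nonincreasing, convex function `g` on `[0,∞)` tending to `0` at
infinity and satisfying `g(x) ≥ g(0) - x` is the transform `Ψ_Π` of some probability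
measure `Π` on `[0,∞)` with finite expectation. -/
theorem psi_surjective (g : ℝ → ℝ)
    (hnn : ∀ x ∈ Set.Ici (0:ℝ), 0 ≤ g x)
    (hanti : AntitoneOn g (Set.Ici 0))
    (hconv : ConvexOn ℝ (Set.Ici 0) g)
    (hlim : Tendsto g atTop (nhds 0))
    (hlb : ∀ x ∈ Set.Ici (0:ℝ), g 0 - x ≤ g x) :
    ∃ μ : Measure ℝ, IsProbabilityMeasure μ ∧ μ (Set.Iio 0) = 0 ∧
      Integrable id μ ∧ ∀ t ∈ Set.Ici (0:ℝ), g t = ∫ x, max (x - t) 0 ∂μ := by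
  have hF : Monotone (psiF g) := psiF_mono hanti hconv hlb
  have hphi : Tendsto (psiPhi g) atTop (𝓝 0) := psi_phi_tendsto hnn hanti hconv hlim hlb
  set f := hF.stieltjesFunction with hfdef
  set μ := f.measure with hmudef
  have hprob : IsProbabilityMeasure μ :=
    StieltjesFunction.isProbabilityMeasure _ (psi_f_bot hF) (psi_f_top hF hphi)
  -- main computation
  have main : ∀ t : ℝ, 0 ≤ t →
      ∫⁻ x, ENNReal.ofReal (max (x - t) 0) ∂μ = ENNReal.ofReal (g t) := by
    intro t ht
    have hmeas : Measurable fun x : ℝ => max (x - t) 0 :=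
      (measurable_id.sub measurable_const).max measurable_const
    have l1 : ∫⁻ x, ENNReal.ofReal (max (x - t) 0) ∂μ
        = ∫⁻ s in Ioi (0:ℝ), μ {x | s < max (x - t) 0} :=
      lintegral_eq_lintegral_meas_lt μ (ae_of_all _ fun x => le_max_right _ _)
        hmeas.aemeasurable
    have l2 : ∫⁻ s in Ioi (0:ℝ), μ {x | s < max (x - t) 0}
        = ∫⁻ s in Ioi (0:ℝ), ENNReal.ofReal (1 - f (s + t)) := by
      refine setLIntegral_congr_fun measurableSet_Ioi (fun s hs => ?_)
      have hset : {x : ℝ | s < max (x - t) 0} = Ioi (t + s) := by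
        ext x
        simp only [mem_setOf_eq, mem_Ioi, lt_max_iff]
        constructor
        · rintro (h | h)
          · linarith
          · exact absurd h (not_lt.mpr (le_of_lt hs))
        · intro h; left; linarith
      rw [hset, psi_measure_Ioi hF (psiF_bounds hanti hconv hlb) hphi, add_comm]
    have l3 : ∫⁻ s in Ioi (0:ℝ), ENNReal.ofReal (1 - f (s + t))
        = ∫⁻ u in Ioi t, ENNReal.ofReal (1 - f u) := by
      have hpre : (fun s : ℝ => s + t) ⁻¹' Ioi t = Ioi (0:ℝ) := by
        ext s; simp only [mem_preimage, mem_Ioi]; constructor <;> intro <;> linarith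
      have hmf : Measurable fun u : ℝ => ENNReal.ofReal (1 - f u) :=
        (measurable_const.sub f.mono.measurable).ennreal_ofReal
      have := (measurePreserving_add_right (volume : Measure ℝ) t).setLIntegral_comp_preimage
        (s := Ioi t) measurableSet_Ioi hmf
      rw [hpre] at this
      exact this
    have l4 : ∫⁻ u in Ioi t, ENNReal.ofReal (1 - f u)
        = ∫⁻ u in Ioi t, ENNReal.ofReal (-psiPhi g u) := by
      refine lintegral_congr_ae ?_
      have hres : ∀ᵐ u ∂(volume.restrict (Ioi t)), f u = psiF g u :=
        ae_restrict_of_ae (psi_f_ae hF)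
      filter_upwards [hres, ae_restrict_mem measurableSet_Ioi] with u hu hmem
      rw [hu]
      have hu0 : ¬ u < 0 := not_lt.mpr (le_trans ht (le_of_lt hmem))
      rw [psiF, if_neg hu0]
      ring_nf
    have l5 : ∫⁻ u in Ioi t, ENNReal.ofReal (-psiPhi g u) = ENNReal.ofReal (g t) := by
      obtain ⟨hint, hval⟩ := psi_integralOn hnn hanti hconv hlim hlb ht
      rw [← ofReal_integral_eq_lintegral_ofReal hint ?_]
      · rw [hval]
      · refine (ae_restrict_iff' measurableSet_Ioi).mpr (ae_of_all _ fun u hu => ?_)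
        simp only [Pi.zero_apply, neg_nonneg]
        exact psi_phi_nonpos hanti hconv hlb (le_trans ht (le_of_lt hu))
    rw [l1, l2, l3, l4, l5]
  have hintmax : ∀ t : ℝ, 0 ≤ t → Integrable (fun x => max (x - t) 0) μ := by
    intro t ht
    refine ⟨(continuous_id.sub continuous_const).max continuous_const
      |>.aestronglyMeasurable, ?_⟩
    refine (hasFiniteIntegral_iff_ofReal
      (ae_of_all _ fun x : ℝ => le_max_right (x - t) (0:ℝ))).mpr ?_
    rw [main t ht]
    exact ENNReal.ofReal_lt_top
  have hval : ∀ t : ℝ, 0 ≤ t → ∫ x, max (x - t) 0 ∂μ = g t := by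
    intro t ht
    have heq := integral_eq_lintegral_of_nonneg_ae (μ := μ) (f := fun x => max (x - t) 0)
      (ae_of_all _ fun x => le_max_right _ _)
      ((continuous_id.sub continuous_const).max continuous_const).aestronglyMeasurable
    rw [heq, main t ht, ENNReal.toReal_ofReal (hnn t ht)]
  refine ⟨μ, hprob, psi_measure_Iio hF, ?_, fun t ht => (hval t ht).symm⟩
  have h0 : Integrable (fun x => max (x - 0) 0) μ := hintmax 0 le_rfl
  refine h0.congr ?_
  have hsub : {x : ℝ | ¬ max (x - 0) 0 = id x} ⊆ Set.Iio 0 := by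
    intro x hx
    simp only [mem_setOf_eq, sub_zero, id] at hx
    by_contra h
    rw [mem_Iio, not_lt] at h
    exact hx (max_eq_left h)
  rw [Filter.EventuallyEq, ae_iff]
  exact measure_mono_null hsub (psi_measure_Iio hF)
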